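/- Let q ≥ 2 be an even integer, τ = i·√q, and let w ≥ 3 be an odd integer. Set A := q^{(w+1)/2}/2 (a rational integer), B := A/τ (an element of ℤ[τ], since τ^{w−1} divides A in ℤ[τ]), and s := (−1)^{(w+1)/2}. Then: (a) 1 and −1 are minimal norm representatives modulo τ^w; (b) A − 1 − τ is a minimal norm representative modulo τ^w; (c) −B − 1 is a minimal norm representative modulo τ^w; (d) −s − τ^{w−1} is a minimal norm representative modulo τ^w; (e) in ℤ[τ] the identity (A − 1 − τ)·τ^{w−1} + (−s) = s·τ^{2w} + (−B − 1)·τ^w + (−s − τ^{w−1}) holds. -/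

import Mathlib

open Complex

noncomputable section

/-- The lattice `ℤ[τ] = {a + b·τ : a, b ∈ ℤ}` as a subset of `ℂ`. -/
def Ztau (τ : ℂ) : Set ℂ := {z | ∃ a b : ℤ, z = (a : ℂ) + (b : ℂ) * τ}

/-- `z` is divisible by `τ` in `ℤ[τ]`. -/
def TauDvd (τ : ℂ) (z : ℂ) : Prop := ∃ y ∈ Ztau τ, z = τ * y

/-- `x` is a minimal norm representative modulo `τ^w`: an element of `ℤ[τ]`,
not divisible by `τ`, of minimal norm in its residue class modulo `τ^w`. -/
def MinNormRep (τ : ℂ) (w : ℕ) (x : ℂ) : Prop :=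
  x ∈ Ztau τ ∧ ¬ TauDvd τ x ∧
    ∀ y ∈ Ztau τ, ‖x‖ ≤ ‖x - τ ^ w * y‖

/-- `τ = i·√q`. -/
def tau0 (q : ℤ) : ℂ := I * (Real.sqrt q : ℂ)

/-- `A = q^{(w+1)/2}/2`. -/
def A18 (q : ℤ) (w : ℕ) : ℂ := (q : ℂ) ^ ((w + 1) / 2) / 2

/-- `B = A/τ`. -/
def B18 (q : ℤ) (w : ℕ) : ℂ := A18 q w / tau0 q

/-- `s = (−1)^{(w+1)/2}`. -/
def s18 (w : ℕ) : ℂ := (-1) ^ ((w + 1) / 2)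


lemma sq_le_shift' (c u x : ℝ) (m : ℤ) (h : 2*|u| ≤ c) (hx : x = u + m*c) :
    u^2 ≤ x^2 := by
  subst hx
  rcases eq_or_ne m 0 with rfl|hm
  · simp
  · have h1 : (1:ℝ) ≤ |(m:ℝ)| := by exact_mod_cast Int.one_le_abs hm
    have hc : (0:ℝ) ≤ c := le_trans (by positivity) h
    have h2 : -(|u| * |(m:ℝ)|) ≤ u * m := by rw [← abs_mul]; exact neg_abs_le _
    have h3 : 2*|u| ≤ |(m:ℝ)| * c := le_trans h (le_mul_of_one_le_left hc h1)
    have h5 : (0:ℝ) ≤ (|(m:ℝ)| * c) * (|(m:ℝ)| * c - 2*|u|) :=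
      mul_nonneg (by positivity) (by linarith)
    have h2c := mul_le_mul_of_nonneg_right h2 hc
    have h7 : ((m:ℝ))^2 * c^2 = (|(m:ℝ)| * c) * (|(m:ℝ)| * c) := by
      rw [← _root_.sq_abs (m:ℝ)]; ring
    have h8 : (0:ℝ) ≤ 2*(u*(m:ℝ)*c) + (m:ℝ)^2*c^2 := by rw [h7]; nlinarith [h5, h2c]
    nlinarith [h8]

lemma tau0_sq (q : ℤ) (hq0 : 0 ≤ q) : tau0 q ^ 2 = -(q:ℂ) := by
  have hr2 : ((Real.sqrt q : ℝ):ℂ)^2 = (q:ℂ) := by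
    norm_cast
    rw [Real.sq_sqrt (by exact_mod_cast hq0)]
  rw [tau0, mul_pow, I_sq, hr2]; ring

lemma absq (q : ℤ) (hq0 : 0 ≤ q) (U V : ℤ) :
    ‖(U:ℂ) + (V:ℂ) * tau0 q‖ ^ 2 = (U:ℝ)^2 + (V:ℝ)^2 * q := by
  have hr : Real.sqrt (q:ℝ) ^ 2 = q := Real.sq_sqrt (by exact_mod_cast hq0)
  rw [Complex.sq_norm, Complex.normSq_apply]
  simp [tau0]
  nlinarith [hr]

lemma key (q : ℤ) (hq : 2 ≤ q) (k : ℕ) (hk : 2 ≤ k) (u v : ℤ)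
    (hu : 2*|u| ≤ q^k) (hv : 2*|v| ≤ q^(k-1)) (hnd : ¬ ((q:ℤ) ∣ u)) :
    MinNormRep (tau0 q) (2*k-1) ((u:ℂ) + (v:ℂ) * tau0 q) := by
  have hq0 : (0:ℤ) ≤ q := by omega
  have ht2 : tau0 q ^ 2 = -(q:ℂ) := tau0_sq q hq0
  refine ⟨⟨u, v, rfl⟩, ?_, ?_⟩
  · rintro ⟨y, ⟨a, b, rfl⟩, heq⟩
    have heq2 : ((u + b*q : ℤ):ℂ) = ((a - v : ℤ):ℂ) * tau0 q := by
      push_cast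
      linear_combination heq + (b:ℂ) * ht2
    have hre := congrArg Complex.re heq2
    simp [tau0] at hre
    have : u + b * q = 0 := by exact_mod_cast hre
    exact hnd ⟨-b, by linarith⟩
  · rintro y ⟨a, b, rfl⟩
    have hpw : tau0 q ^ (2*k-1) * ((a:ℂ) + (b:ℂ)*tau0 q)
        = ((-b*(-1)^(k-1)*q^k : ℤ):ℂ) + ((a*(-1)^(k-1)*q^(k-1) : ℤ):ℂ) * tau0 q := by
      have h1 : tau0 q ^ (2*k-1) = (tau0 q ^ 2)^(k-1) * tau0 q := by
        rw [← pow_mul, ← pow_succ]; congr 1; omega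
      have hqk : (q:ℂ)^k = (q:ℂ)^(k-1) * q := by rw [← pow_succ]; congr 1; omega
      rw [h1, ht2, neg_pow]
      push_cast
      rw [hqk]
      linear_combination ((-1:ℂ))^(k-1) * (q:ℂ)^(k-1) * b * ht2
    rw [hpw]
    have hx : (u:ℂ) + (v:ℂ)*tau0 q - (((-b*(-1)^(k-1)*q^k : ℤ):ℂ) + ((a*(-1)^(k-1)*q^(k-1):ℤ):ℂ)*tau0 q)
        = ((u - (-b*(-1)^(k-1)*q^k) : ℤ):ℂ) + (((v - a*(-1)^(k-1)*q^(k-1)) : ℤ):ℂ) * tau0 q := by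
      push_cast; ring
    rw [hx]
    refine le_of_pow_le_pow_left₀ two_ne_zero (norm_nonneg _) ?_
    rw [absq q hq0, absq q hq0]
    have hu' : 2*|(u:ℝ)| ≤ (q:ℝ)^k := by exact_mod_cast hu
    have hv' : 2*|(v:ℝ)| ≤ (q:ℝ)^(k-1) := by exact_mod_cast hv
    have h1 : ((u:ℤ):ℝ)^2 ≤ ((u - (-b*(-1)^(k-1)*q^k) : ℤ):ℝ)^2 :=
      sq_le_shift' _ _ _ (b*(-1)^(k-1)) hu' (by push_cast; ring)
    have h2 : ((v:ℤ):ℝ)^2 ≤ ((v - a*(-1)^(k-1)*q^(k-1) : ℤ):ℝ)^2 :=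
      sq_le_shift' _ _ _ (-(a*(-1)^(k-1))) hv' (by push_cast; ring)
    have h2q := mul_le_mul_of_nonneg_right h2 (show (0:ℝ) ≤ (q:ℝ) by exact_mod_cast hq0)
    exact add_le_add h1 h2q

/-- The counter-example construction for `p = 0`, even `q ≥ 2`, and odd
`w ≥ 3`: `A` is a rational integer, `B ∈ ℤ[τ]`, (a)–(d) the listed elements
are minimal norm representatives modulo `τ^w`, and (e) the stated identity
holds in `ℤ[τ]`. -/
theorem nonopt_construction_p0_q_even (q : ℤ) (hq : 2 ≤ q) (hqe : Even q)
    (w : ℕ) (hw : 3 ≤ w) (hwodd : Odd w) :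
    (∃ a : ℤ, A18 q w = (a : ℂ)) ∧
    B18 q w ∈ Ztau (tau0 q) ∧
    (MinNormRep (tau0 q) w 1 ∧ MinNormRep (tau0 q) w (-1)) ∧
    MinNormRep (tau0 q) w (A18 q w - 1 - tau0 q) ∧
    MinNormRep (tau0 q) w (-(B18 q w) - 1) ∧
    MinNormRep (tau0 q) w (-(s18 w) - tau0 q ^ (w - 1)) ∧
    (A18 q w - 1 - tau0 q) * tau0 q ^ (w - 1) + (-(s18 w))
      = s18 w * tau0 q ^ (2 * w) + (-(B18 q w) - 1) * tau0 q ^ w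
        + (-(s18 w) - tau0 q ^ (w - 1)) := by
  obtain ⟨j, hj⟩ := hwodd
  obtain ⟨c, hc⟩ := hqe
  set k : ℕ := j + 1 with hkdef
  have hk : 2 ≤ k := by omega
  have hwk : w = 2*k - 1 := by omega
  have hk1 : (w + 1) / 2 = k := by omega
  have hq0 : (0:ℤ) ≤ q := by omega
  have ht2 : tau0 q ^ 2 = -(q:ℂ) := tau0_sq q hq0
  have ht0 : tau0 q ≠ 0 := by
    intro h
    have h1 : (-(q:ℂ)) = 0 := by rw [← ht2, h]; ring
    have h2 : (q:ℤ) = 0 := by exact_mod_cast neg_eq_zero.mp h1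
    omega
  -- integer power facts
  have hqkZ : q^k = q^(k-1) * q := by rw [← pow_succ]; congr 1 <;> omega
  have hqk1Z : q^(k-1) = q^(k-2) * q := by rw [← pow_succ]; congr 1 <;> omega
  have hQ2 : (2:ℤ) ≤ q^(k-1) := by
    calc (2:ℤ) = 2^1 := rfl
    _ ≤ 2^(k-1) := pow_le_pow_right₀ (by norm_num) (by omega)
    _ ≤ q^(k-1) := pow_le_pow_left₀ (by norm_num) hq _
  have hQk : (2:ℤ) ≤ q^k := by
    calc (2:ℤ) = 2^1 := rfl
    _ ≤ 2^k := pow_le_pow_right₀ (by norm_num) (by omega)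
    _ ≤ q^k := pow_le_pow_left₀ (by norm_num) hq _
  -- A and B as lattice elements
  set a0 : ℤ := c * q^(k-1) with ha0
  set b0 : ℤ := c * q^(k-2) with hb0
  have h2a : 2 * a0 = q^k := by
    rw [ha0, hqkZ]; linear_combination (-q^(k-1)) * hc
  have h2b : 2 * b0 = q^(k-1) := by
    rw [hb0, hqk1Z]; linear_combination (-q^(k-2)) * hc
  have h2aC : 2 * ((a0:ℤ):ℂ) = (q:ℂ)^k := by exact_mod_cast h2a
  have h2bC : 2 * ((b0:ℤ):ℂ) = (q:ℂ)^(k-1) := by exact_mod_cast h2b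
  have hqkC : (q:ℂ)^k = (q:ℂ)^(k-1) * q := by rw [← pow_succ]; congr 1 <;> omega
  have hA : A18 q w = ((a0:ℤ):ℂ) := by
    rw [A18, hk1, div_eq_iff (two_ne_zero)]
    linear_combination -h2aC
  have hB : B18 q w = -((b0:ℤ):ℂ) * tau0 q := by
    rw [B18, hA, div_eq_iff ht0]
    linear_combination (b0:ℂ) * ht2 + h2aC/2 - ((q:ℂ)/2) * h2bC + hqkC/2
  -- powers of tau
  have hp1 : tau0 q ^ (w - 1) = (-1:ℂ)^(k-1) * (q:ℂ)^(k-1) := by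
    rw [show w - 1 = 2*(k-1) by omega, pow_mul, ht2, neg_pow]
  have hpw : tau0 q ^ w = ((-1:ℂ)^(k-1) * (q:ℂ)^(k-1)) * tau0 q := by
    rw [show w = 2*(k-1) + 1 by omega, pow_succ, pow_mul, ht2, neg_pow]
  have hp2w : tau0 q ^ (2*w) = ((-1:ℂ)^(k-1) * (q:ℂ)^(k-1))^2 * (-(q:ℂ)) := by
    rw [show 2*w = 2*((k-1)*2 + 1) by omega, pow_mul, ht2, pow_succ, pow_mul, neg_pow]
  have hs : s18 w = -((-1:ℂ)^(k-1)) := by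
    rw [s18, hk1, show k - 1 = j by omega, show k = j + 1 from rfl, pow_succ]; ring
  have hS : ((-1:ℂ)^(k-1))^2 = 1 := by
    rw [← pow_mul, mul_comm (k-1) 2, pow_mul]; norm_num
  have hvz : 2*|(0:ℤ)| ≤ q^(k-1) := by simpa using pow_nonneg hq0 (k-1)
  refine ⟨⟨a0, hA⟩, ⟨0, -b0, by rw [hB]; push_cast; ring⟩, ⟨?_, ?_⟩, ?_, ?_, ?_, ?_⟩
  · -- x = 1
    have hx : (1:ℂ) = ((1:ℤ):ℂ) + ((0:ℤ):ℂ) * tau0 q := by push_cast; ring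
    rw [hx, hwk]
    refine key q hq k hk 1 0 (by simpa using hQk) hvz ?_
    intro h; have := Int.le_of_dvd one_pos h; omega
  · -- x = -1
    have hx : (-1:ℂ) = ((-1:ℤ):ℂ) + ((0:ℤ):ℂ) * tau0 q := by push_cast; ring
    rw [hx, hwk]
    refine key q hq k hk (-1) 0 (by simpa using hQk) hvz ?_
    intro h; rw [dvd_neg] at h; have := Int.le_of_dvd one_pos h; omega
  · -- x = A - 1 - τ
    have hx : A18 q w - 1 - tau0 q = ((a0 - 1 : ℤ):ℂ) + ((-1:ℤ):ℂ) * tau0 q := by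
      rw [hA]; push_cast; ring
    rw [hx, hwk]
    have ha0pos : 1 ≤ a0 := by nlinarith [h2a, hQk]
    have hqd : (q:ℤ) ∣ a0 := by
      rw [ha0]; exact Dvd.dvd.mul_left (dvd_pow_self q (by omega)) c
    refine key q hq k hk (a0-1) (-1) ?_ (by simpa using hQ2) ?_
    · rw [_root_.abs_of_nonneg (by omega : (0:ℤ) ≤ a0 - 1)]; linarith [h2a]
    · intro h
      have hd1 : (q:ℤ) ∣ 1 := by
        have := dvd_sub hqd h
        simpa [sub_sub_cancel] using this
      have := Int.le_of_dvd one_pos hd1; omega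
  · -- x = -B - 1
    have hx : -(B18 q w) - 1 = ((-1:ℤ):ℂ) + ((b0:ℤ):ℂ) * tau0 q := by
      rw [hB]; push_cast; ring
    rw [hx, hwk]
    have hb0pos : 0 ≤ b0 := by nlinarith [h2b, hQ2]
    refine key q hq k hk (-1) b0 (by simpa using hQk) ?_ ?_
    · rw [_root_.abs_of_nonneg hb0pos]; linarith [h2b]
    · intro h; rw [dvd_neg] at h; have := Int.le_of_dvd one_pos h; omega
  · -- x = -s - τ^{w-1}
    set u0 : ℤ := (-1)^(k-1) * (1 - q^(k-1)) with hu0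
    have hx : -(s18 w) - tau0 q ^ (w-1) = ((u0:ℤ):ℂ) + ((0:ℤ):ℂ) * tau0 q := by
      rw [hs, hp1, hu0]; push_cast; ring
    rw [hx, hwk]
    refine key q hq k hk u0 0 ?_ hvz ?_
    · rw [hu0, _root_.abs_mul, _root_.abs_pow, abs_neg, abs_one, one_pow, one_mul,
        abs_sub_comm, _root_.abs_of_nonneg (by omega : (0:ℤ) ≤ q^(k-1) - 1)]
      have h9 : (2:ℤ)*q^(k-1) ≤ q*q^(k-1) :=
        mul_le_mul_of_nonneg_right hq (by linarith)
      linarith [hqkZ, h9]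
    · intro h
      have hS1 : (q:ℤ) ∣ (-1:ℤ)^(k-1) := by
        have heq : ((-1:ℤ)^(k-1)) = u0 + (-1)^(k-1) * q^(k-1) := by rw [hu0]; ring
        rw [heq]
        exact dvd_add h (Dvd.dvd.mul_left (dvd_pow_self q (by omega)) _)
      rcases Nat.even_or_odd (k-1) with he|ho
      · rw [he.neg_one_pow] at hS1
        have := Int.le_of_dvd one_pos hS1; omega
      · rw [ho.neg_one_pow, dvd_neg] at hS1
        have := Int.le_of_dvd one_pos hS1; omega
  · -- identity (e)
    have hA2 : A18 q w = (q:ℂ) * (q:ℂ)^(k-1) / 2 := by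
      rw [A18, hk1, hqkC]; ring
    have hB2 : B18 q w = -((q:ℂ)^(k-1)/2) * tau0 q := by
      rw [hB]
      linear_combination (-(tau0 q)/2) * h2bC
    rw [hA2, hB2, hs, hp1, hpw, hp2w]
    linear_combination (-((-1:ℂ)^(k-1) * ((q:ℂ)^(k-1))^2)/2) * ht2
      + (-((-1:ℂ)^(k-1) * ((q:ℂ)^(k-1))^2 * (q:ℂ))) * hS
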